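/- If μ is a nonzero finite positive singular Borel measure on the circle with harmonic extension u to the unit disc and harmonic conjugate ũ, then the analytic function F(z) = exp(u(z) + i ũ(z)) is unbounded on the open unit disc. -/

import Mathlib

open MeasureTheory Complex Filter AddCircle
open Set Metric

instance : Fact (0 < 2 * Real.pi) := ⟨Real.two_pi_pos⟩

/-- The Herglotz integral of a measure `μ` on the circle `ℝ/2πℤ`:
`H(z) = ∫ (e^{it} + z)/(e^{it} - z) dμ(t)`. Its real part is the Poisson (harmonic)
extension `u` of `μ` to the disc, and its imaginary part is the harmonic conjugate `ũ`
of `u` normalized by `ũ(0) = 0`; thus `exp H = exp (u + iũ)`. -/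
noncomputable def herglotz (μ : Measure (AddCircle (2 * Real.pi))) (z : ℂ) : ℂ :=
  ∫ x, (((toCircle x : ℂ)) + z) / (((toCircle x : ℂ)) - z) ∂μ

lemma exp_I_sub_one_le (c : ℝ) : ‖Complex.exp (c * I) - 1‖ ≤ |c| := by
  have h1 : Complex.exp (c * I) - 1 = (Real.cos c - 1 : ℝ) + (Real.sin c : ℝ) * I := by
    rw [Complex.exp_mul_I]; push_cast; ring_nf
  have h2 : ‖Complex.exp (c * I) - 1‖ ^ 2 = (Real.cos c - 1)^2 + (Real.sin c)^2 := by
    rw [h1, Complex.sq_norm, Complex.normSq_apply]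
    simp [← Complex.ofReal_cos, ← Complex.ofReal_sin]; ring
  have h3 : (Real.cos c - 1)^2 + (Real.sin c)^2 ≤ |c|^2 := by
    have := Real.one_sub_sq_div_two_le_cos (x := c)
    have hc1 := Real.cos_le_one c
    have hs := Real.sin_sq_add_cos_sq c
    rw [_root_.sq_abs]; nlinarith
  have h4 : ‖Complex.exp (c * I) - 1‖ ^ 2 ≤ |c| ^ 2 := h2 ▸ h3
  exact (pow_le_pow_iff_left₀ (norm_nonneg _) (abs_nonneg c) two_ne_zero).mp h4

lemma chord_le_arc (s t : AddCircle (2*Real.pi)) :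
    ‖(toCircle s : ℂ) - (toCircle t : ℂ)‖ ≤ dist s t := by
  induction s using QuotientAddGroup.induction_on with | H a => ?_
  induction t using QuotientAddGroup.induction_on with | H b => ?_
  have hp : (0:ℝ) < 2 * Real.pi := Real.two_pi_pos
  have htc : ∀ x : ℝ, ((toCircle (x : AddCircle (2*Real.pi)) : Circle) : ℂ)
      = Complex.exp (x * I) := by
    intro x
    rw [AddCircle.toCircle_apply_mk, Circle.coe_exp]
    rw [div_self (by positivity : (2*Real.pi : ℝ) ≠ 0), one_mul]
  set d := a - b with hd
  set k : ℤ := round ((2*Real.pi)⁻¹ * d) with hk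
  set c : ℝ := d - k * (2*Real.pi) with hc
  have hnorm : dist ((a : AddCircle (2*Real.pi))) (b : AddCircle (2*Real.pi)) = |c| := by
    rw [dist_eq_norm]
    have : ((a : AddCircle (2*Real.pi))) - b = ((d : ℝ) : AddCircle (2*Real.pi)) := by
      rw [hd]; exact (QuotientAddGroup.mk_sub _ a b).symm
    rw [this, AddCircle.norm_eq]
  have hexp : Complex.exp (d * I) = Complex.exp (c * I) := by
    have : (d : ℂ) * I = c * I + (k : ℂ) * (2 * Real.pi * I) := by
      push_cast [hc]; ring
    rw [this, Complex.exp_add, Complex.exp_int_mul_two_pi_mul_I, mul_one]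
  calc ‖(toCircle ((a:AddCircle (2*Real.pi))) : ℂ) - (toCircle ((b:AddCircle (2*Real.pi))) : ℂ)‖
      = ‖Complex.exp (b * I) * (Complex.exp (d * I) - 1)‖ := by
        rw [htc, htc, mul_sub, ← Complex.exp_add, mul_one]
        congr 3
        push_cast [hd]; ring
    _ = ‖Complex.exp (d * I) - 1‖ := by
        rw [norm_mul, Complex.norm_exp_ofReal_mul_I, one_mul]
    _ ≤ |c| := by rw [hexp]; exact exp_I_sub_one_le c
    _ = dist ((a : AddCircle (2*Real.pi))) (b : AddCircle (2*Real.pi)) := hnorm.symm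

lemma kernel_re (w z : ℂ) (hw : ‖w‖ = 1) :
    ((w + z) / (w - z)).re = (1 - Complex.normSq z) / Complex.normSq (w - z) := by
  by_cases h : w - z = 0
  · simp [h, sub_eq_zero.mp h]
  · have hn : Complex.normSq (w - z) ≠ 0 := by
      simpa [Complex.normSq_eq_zero] using h
    have hw2 : w.re ^ 2 + w.im ^ 2 = 1 := by
      have := Complex.sq_norm w
      rw [hw] at this
      have h2 : Complex.normSq w = w.re ^ 2 + w.im ^ 2 := by
        simp [Complex.normSq_apply]; ring
      rw [h2] at this; linarith [this]
    rw [Complex.div_re, ← add_div, eq_div_iff hn, div_mul_cancel₀ _ hn,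
      Complex.normSq_apply]
    simp only [Complex.sub_re, Complex.sub_im, Complex.add_re, Complex.add_im]
    nlinarith [hw2]

lemma exists_density_point (ν : Measure ℝ) [IsFiniteMeasure ν] (hν : ν ≠ 0)
    (hs : ν.MutuallySingular volume) :
    ∃ x : ℝ, ∀ n : ℕ, ∃ r : ℝ, 0 < r ∧ r ≤ 1/2 ∧
      ENNReal.ofReal ((n : ℝ) * r) ≤ ν (closedBall x r) := by
  set v := Besicovitch.vitaliFamily ν with hv
  have h := v.ae_eventually_measure_zero_of_singular hs.symm
  have hae : (MeasureTheory.ae ν).NeBot := ae_neBot.mpr hν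
  obtain ⟨x, hx⟩ := h.exists
  refine ⟨x, fun n => ?_⟩
  have hx2 : Tendsto (fun r : ℝ => volume (closedBall x r) / ν (closedBall x r))
      (nhdsWithin 0 (Ioi 0)) (nhds 0) :=
    hx.comp (Besicovitch.tendsto_filterAt ν x)
  set ε : ENNReal := ENNReal.ofReal (1 / (n + 1)) with hε
  have hεpos : 0 < ε := by
    rw [hε]; exact ENNReal.ofReal_pos.mpr (by positivity)
  have hev : ∀ᶠ r in nhdsWithin 0 (Ioi 0),
      volume (closedBall x r) / ν (closedBall x r) < ε ∧ r ∈ Ioo (0:ℝ) (1/2) := by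
    filter_upwards [hx2 (ENNReal.nhds_zero_basis.mem_of_mem hεpos),
      self_mem_nhdsWithin, Ioo_mem_nhdsGT_of_mem (by norm_num : (0:ℝ) ∈ Ico 0 (1/2))]
      with r h1 h2 h3
    exact ⟨h1, h3⟩
  obtain ⟨r, hlt, hr0, hr2⟩ : ∃ r : ℝ, volume (closedBall x r) / ν (closedBall x r) < ε
      ∧ 0 < r ∧ r < 1/2 := by
    obtain ⟨r, h1, h2⟩ := hev.exists
    exact ⟨r, h1, h2.1, h2.2⟩
  have hvol : volume (closedBall x r) = ENNReal.ofReal (2 * r) := by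
    rw [Real.volume_closedBall]
  have hb0 : ν (closedBall x r) ≠ 0 := by
    intro h0
    rw [h0, ENNReal.div_zero] at hlt
    · exact (hlt.trans_le le_top).ne rfl
    · rw [hvol]; exact (ENNReal.ofReal_pos.mpr (by linarith)).ne'
  have hmul : volume (closedBall x r) < ε * ν (closedBall x r) :=
    (ENNReal.div_lt_iff (Or.inl hb0) (Or.inl (measure_ne_top ν _))).mp hlt
  refine ⟨r, hr0, hr2.le, ?_⟩
  have key : ENNReal.ofReal ((n + 1 : ℝ) * (2 * r)) ≤ ν (closedBall x r) := by
    calc ENNReal.ofReal ((n + 1 : ℝ) * (2 * r))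
        = ENNReal.ofReal (n + 1 : ℝ) * ENNReal.ofReal (2 * r) :=
          ENNReal.ofReal_mul (by positivity)
      _ ≤ ENNReal.ofReal (n + 1 : ℝ) * (ε * ν (closedBall x r)) := by
          rw [← hvol]; exact mul_le_mul_right hmul.le _
      _ = (ENNReal.ofReal (n + 1 : ℝ) * ε) * ν (closedBall x r) := by ring
      _ = 1 * ν (closedBall x r) := by
          rw [hε, ← ENNReal.ofReal_mul (by positivity)]
          rw [mul_one_div, div_self (by positivity : (n:ℝ) + 1 ≠ 0), ENNReal.ofReal_one]
      _ = ν (closedBall x r) := one_mul _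
  refine le_trans (ENNReal.ofReal_le_ofReal ?_) key
  nlinarith

lemma herglotz_integrable (μ : Measure (AddCircle (2 * Real.pi))) [IsFiniteMeasure μ]
    {z : ℂ} (hz : ‖z‖ < 1) :
    Integrable (fun y : AddCircle (2 * Real.pi) =>
      ((toCircle y : ℂ) + z) / ((toCircle y : ℂ) - z)) μ := by
  have hne : ∀ y : AddCircle (2 * Real.pi), ((toCircle y : ℂ)) - z ≠ 0 := by
    intro y
    rw [sub_ne_zero]
    intro h
    rw [← h] at hz
    simp [Circle.norm_coe] at hz
  have hcont : Continuous (fun y : AddCircle (2 * Real.pi) =>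
      ((toCircle y : ℂ) + z) / ((toCircle y : ℂ) - z)) := by
    have h1 : Continuous (fun y : AddCircle (2 * Real.pi) => ((toCircle y : ℂ))) :=
      continuous_induced_dom.comp AddCircle.continuous_toCircle
    exact (h1.add continuous_const).div (h1.sub continuous_const) hne
  exact hcont.integrable_of_hasCompactSupport
    (IsCompact.of_isClosed_subset isCompact_univ (isClosed_tsupport _) (Set.subset_univ _))

/-- If `μ` is a nonzero finite positive singular Borel measure on the circle, `u` its
harmonic (Poisson) extension and `ũ` the harmonic conjugate, then the analytic function
`F = exp (u + iũ)` is unbounded on the open unit disc. -/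
theorem exp_herglotz_unbounded (μ : Measure (AddCircle (2 * Real.pi))) [IsFiniteMeasure μ]
    (hne : μ ≠ 0) (hsing : μ.MutuallySingular volume) :
    ¬ ∃ C : ℝ, ∀ z ∈ Metric.ball (0 : ℂ) 1, ‖Complex.exp (herglotz μ z)‖ ≤ C := by
  rintro ⟨C, hC⟩
  -- transfer μ to a measure ν on ℝ
  set e := AddCircle.measurableEquivIoc (2*Real.pi) 0 with he
  set g : AddCircle (2*Real.pi) → ℝ := fun y => ((e y : Ioc (0:ℝ) (0 + (2*Real.pi))) : ℝ) with hgdef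
  have hg : Measurable g := measurable_subtype_coe.comp e.measurable
  have hgmem : ∀ y, g y ∈ Ioc (0:ℝ) (0 + (2*Real.pi)) := fun y => (e y).2
  have hgy : ∀ y : AddCircle (2*Real.pi), ((g y : ℝ) : AddCircle (2*Real.pi)) = y := by
    intro y
    conv_rhs => rw [← e.symm_apply_apply y]
    rfl
  have hginj : Function.Injective g := by
    intro a b hab
    have := congrArg (fun u : ℝ => ((u : AddCircle (2*Real.pi)))) hab
    simpa [hgy] using this
  set ν : Measure ℝ := Measure.map g μ with hν
  haveI : IsFiniteMeasure ν := by
    rw [hν]; exact Measure.isFiniteMeasure_map μ g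
  have hν0 : ν ≠ 0 := by
    intro h0
    apply hne
    have : ν Set.univ = μ Set.univ := by
      rw [hν, Measure.map_apply hg MeasurableSet.univ, Set.preimage_univ]
    rw [h0] at this
    simp only [Measure.coe_zero, Pi.zero_apply] at this
    exact Measure.measure_univ_eq_zero.mp this.symm
  have hνsing : ν.MutuallySingular volume := by
    obtain ⟨s, hsm, hs0, hsc⟩ := hsing
    refine ⟨(g '' sᶜ)ᶜ, ?_, ?_, ?_⟩
    · apply MeasurableSet.compl
      have : g '' sᶜ = Subtype.val '' (e '' sᶜ) := by
        rw [← Set.image_comp]; rfl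
      rw [this]
      exact (MeasurableSet.subtype_image measurableSet_Ioc
        (e.measurableSet_image.mpr hsm.compl))
    · rw [hν, Measure.map_apply hg (by
        apply MeasurableSet.compl
        have : g '' sᶜ = Subtype.val '' (e '' sᶜ) := by rw [← Set.image_comp]; rfl
        rw [this]
        exact (MeasurableSet.subtype_image measurableSet_Ioc
          (e.measurableSet_image.mpr hsm.compl)))]
      rw [Set.preimage_compl, Set.preimage_image_eq _ hginj, compl_compl]
      exact hs0
    · rw [compl_compl]
      have hsub : g '' sᶜ ⊆ ((↑) : ℝ → AddCircle (2*Real.pi)) ⁻¹' sᶜ ∩ Ioc (0:ℝ) (0 + (2*Real.pi)) := by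
        rintro - ⟨y, hy, rfl⟩
        exact ⟨by rw [Set.mem_preimage, hgy]; exact hy, hgmem y⟩
      refine measure_mono_null hsub ?_
      have hmp := AddCircle.measurePreserving_mk (2*Real.pi) 0
      have : volume (((↑) : ℝ → AddCircle (2*Real.pi)) ⁻¹' sᶜ ∩ Ioc (0:ℝ) (0 + (2*Real.pi)))
          = (volume.restrict (Ioc (0:ℝ) (0 + (2*Real.pi)))) (((↑) : ℝ → AddCircle (2*Real.pi)) ⁻¹' sᶜ) := by
        rw [Measure.restrict_apply (AddCircle.measurable_mk' hsm.compl)]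
      rw [this, ← Measure.map_apply AddCircle.measurable_mk' hsm.compl, hmp.map_eq]
      exact hsc
  -- density point
  obtain ⟨x, hx⟩ := exists_density_point ν hν0 hνsing
  -- choose n large
  have hC0 : 0 < C := lt_of_lt_of_le (norm_pos_iff.mpr (Complex.exp_ne_zero _))
    (hC 0 (by simp))
  obtain ⟨n, hn⟩ := exists_nat_gt (4 * Real.log C)
  obtain ⟨r, hr0, hr2, hrb⟩ := hx n
  -- the point z
  set w : ℂ := (toCircle ((x : AddCircle (2*Real.pi))) : ℂ) with hw
  have hw1 : ‖w‖ = 1 := by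
    rw [hw]; exact Circle.norm_coe _
  set z : ℂ := (1 - r : ℝ) * w with hz
  have hzn : ‖z‖ = 1 - r := by
    rw [hz, norm_mul, hw1, mul_one, Complex.norm_real, Real.norm_eq_abs]
    exact abs_of_nonneg (by linarith)
  have hzlt : ‖z‖ < 1 := by rw [hzn]; linarith
  have hmem : z ∈ Metric.ball (0:ℂ) 1 := by
    rw [Metric.mem_ball, dist_zero_right]; exact hzlt
  -- integrand facts
  set f : AddCircle (2*Real.pi) → ℂ := fun y => ((toCircle y : ℂ) + z)/((toCircle y : ℂ) - z) with hf
  have hint : Integrable f μ := herglotz_integrable μ hzlt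
  have hnsz : Complex.normSq z = (1 - r)^2 := by
    have h : Complex.normSq z = ‖z‖^2 := by
      rw [Complex.normSq_eq_norm_sq]
    rw [h, hzn]
  have hnum : (1:ℝ) - Complex.normSq z = r * (2 - r) := by rw [hnsz]; ring
  have hfre_nonneg : ∀ y, 0 ≤ (f y).re := by
    intro y
    rw [hf]
    have h1 : ‖(toCircle y : ℂ)‖ = 1 := by
      exact Circle.norm_coe _
    rw [kernel_re _ _ h1]
    apply div_nonneg
    · rw [hnum]; nlinarith
    · exact Complex.normSq_nonneg _
  have hfre_ball : ∀ y ∈ Metric.closedBall ((x : AddCircle (2*Real.pi))) r, 1/(4*r) ≤ (f y).re := by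
    intro y hy
    have h1 : ‖(toCircle y : ℂ)‖ = 1 := by
      exact Circle.norm_coe _
    rw [hf, kernel_re _ _ h1]
    have hdist : ‖(toCircle y : ℂ) - z‖ ≤ 2 * r := by
      have h2 : ‖(toCircle y : ℂ) - w‖ ≤ r := by
        refine le_trans (chord_le_arc y _) ?_
        exact Metric.mem_closedBall.mp hy
      have h3 : ‖w - z‖ = r := by
        rw [hz]
        have : w - (1 - r : ℝ) * w = (r : ℝ) * w := by push_cast; ring
        rw [this, norm_mul, hw1, mul_one, Complex.norm_real, Real.norm_eq_abs]
        exact abs_of_pos hr0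
      calc ‖(toCircle y : ℂ) - z‖ ≤ ‖(toCircle y : ℂ) - w‖ + ‖w - z‖ := by
            have : (toCircle y : ℂ) - z = ((toCircle y : ℂ) - w) + (w - z) := by ring
            rw [this]; exact norm_add_le _ _
        _ ≤ r + r := by rw [h3]; linarith
        _ = 2 * r := by ring
    have hden : Complex.normSq ((toCircle y : ℂ) - z) ≤ 4 * r^2 := by
      rw [Complex.normSq_eq_norm_sq]
      nlinarith [norm_nonneg ((toCircle y : ℂ) - z)]
    have hdenpos : 0 < Complex.normSq ((toCircle y : ℂ) - z) := by
      rw [Complex.normSq_pos, sub_ne_zero]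
      intro h
      rw [← h] at hzlt
      rw [h1] at hzlt
      linarith
    rw [hnum]
    rw [div_le_div_iff₀ (by positivity) hdenpos]
    nlinarith
  -- lower bound on Re herglotz
  have hball : ν (Metric.closedBall x r) ≤ μ (Metric.closedBall ((x : AddCircle (2*Real.pi))) r) := by
    rw [hν, Measure.map_apply hg measurableSet_closedBall]
    apply measure_mono
    intro y hy
    rw [Set.mem_preimage, Metric.mem_closedBall, Real.dist_eq] at hy
    rw [Metric.mem_closedBall]
    calc dist y ((x : AddCircle (2*Real.pi))) = ‖((g y : ℝ) : AddCircle (2*Real.pi)) - ((x:ℝ) : AddCircle (2*Real.pi))‖ := by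
          rw [hgy, dist_eq_norm]
      _ = ‖(((g y - x : ℝ)) : AddCircle (2*Real.pi))‖ := by rw [← QuotientAddGroup.mk_sub]
      _ ≤ |g y - x| := by
          simpa [Real.norm_eq_abs] using QuotientAddGroup.norm_mk_le_norm (S := AddSubgroup.zmultiples (2*Real.pi)) (m := g y - x)
      _ ≤ r := hy
  have hmub : (n : ℝ) * r ≤ (μ (Metric.closedBall ((x : AddCircle (2*Real.pi))) r)).toReal := by
    have h1 : ENNReal.ofReal ((n:ℝ) * r) ≤ μ (Metric.closedBall ((x : AddCircle (2*Real.pi))) r) :=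
      le_trans hrb hball
    have h2 := ENNReal.toReal_mono (measure_ne_top μ _) h1
    rwa [ENNReal.toReal_ofReal (by positivity)] at h2
  have hre : (n : ℝ)/4 ≤ (herglotz μ z).re := by
    have hintre : Integrable (fun y => (f y).re) μ := hint.re
    have e1 : (herglotz μ z).re = ∫ y, (f y).re ∂μ := by
      rw [herglotz]
      exact (integral_re hint).symm
    rw [e1]
    calc (n:ℝ)/4 = (1/(4*r)) * ((n:ℝ) * r) := by field_simp
      _ ≤ (1/(4*r)) * (μ (Metric.closedBall ((x : AddCircle (2*Real.pi))) r)).toReal := by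
          apply mul_le_mul_of_nonneg_left hmub (by positivity)
      _ ≤ ∫ y in Metric.closedBall ((x : AddCircle (2*Real.pi))) r, (f y).re ∂μ := by
          apply setIntegral_ge_of_const_le_real measurableSet_closedBall (measure_ne_top μ _)
            hfre_ball hintre.integrableOn
      _ ≤ ∫ y, (f y).re ∂μ := setIntegral_le_integral hintre
          (Filter.Eventually.of_forall hfre_nonneg)
  -- contradiction
  have hCb := hC z hmem
  rw [Complex.norm_exp] at hCb
  have : (herglotz μ z).re ≤ Real.log C := (Real.le_log_iff_exp_le hC0).mpr hCb
  have : (n : ℝ) ≤ 4 * Real.log C := by linarith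
  linarith
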